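/- For any word v ∈ {a,b}* and letters x ≠ y with {x,y} = {a,b}: μ_v(xy) = ψ(v) x y. -/

import Mathlib

def palClosure (w : List Bool) : List Bool :=
  let k := Nat.find (p := fun k => (w.drop k).reverse = w.drop k)
    ⟨w.length, by simp⟩
  w.take k ++ w.drop k ++ (w.take k).reverse

def psi (v : List Bool) : List Bool := v.foldl (fun w x => palClosure (w ++ [x])) []

def E (v : List Bool) : List Bool := v.map (!·)

def mu (x : Bool) (w : List Bool) : List Bool := w.flatMap (fun y => if y = x then [x] else [x, y])

def muW : List Bool → List Bool → List Bool
  | [], w => w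
  | x :: v, w => mu x (muW v w)

def vN (n : ℕ) : List Bool := (List.range n).map (fun i => decide (i % 2 = 1))

def fibF : ℕ → ℕ
  | 0 => 1
  | 1 => 1
  | n + 2 => fibF (n + 1) + fibF n

def HasPeriod (w : List Bool) (p : ℕ) : Prop :=
  0 < p ∧ ∀ i j (hi : i < w.length) (hj : j < w.length),
    i % p = j % p → w.get ⟨i, hi⟩ = w.get ⟨j, hj⟩

noncomputable def minPeriod (w : List Bool) : ℕ := sInf {p | HasPeriod w p}

def dOp : List Bool → List Bool
  | x :: y :: u => y :: x :: u
  | w => w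

def cOp (v : List Bool) : List Bool := (dOp v.reverse).reverse

def contAux : List ℕ → ℕ
  | [] => 1
  | [a] => a
  | a :: b :: t => a * contAux (b :: t) + contAux t


lemma mu_nil (z : Bool) : mu z [] = [] := rfl

lemma mu_append (z : Bool) (u v : List Bool) : mu z (u ++ v) = mu z u ++ mu z v :=
  List.flatMap_append

lemma mu_cons (z a : Bool) (u : List Bool) :
    mu z (a :: u) = (if a = z then [z] else [z, a]) ++ mu z u := by
  by_cases h : a = z <;> simp [mu, h]

lemma mu_singleton (z a : Bool) : mu z [a] = if a = z then [z] else [z, a] := by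
  rw [mu_cons, mu_nil, List.append_nil]


lemma rev_mu (z : Bool) (t : List Bool) :
    (mu z t ++ [z]).reverse = mu z t.reverse ++ [z] := by
  induction t with
  | nil => rfl
  | cons a t ih =>
    rw [mu_cons, List.append_assoc, List.reverse_append, ih, List.reverse_cons,
      mu_append, mu_singleton]
    by_cases h : a = z <;> simp [h]

lemma mu_inj (z : Bool) : ∀ a b : List Bool, mu z a = mu z b → a = b := by
  intro a
  induction a with
  | nil =>
    intro b h
    cases b with
    | nil => rfl
    | cons y b =>
      rw [mu_nil, mu_cons] at h
      exfalso; by_cases hy : y = z <;> simp [hy] at h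
  | cons x a ih =>
    intro b h
    cases b with
    | nil =>
      rw [mu_nil, mu_cons] at h
      exfalso; by_cases hx : x = z <;> simp [hx] at h
    | cons y b =>
      rw [mu_cons, mu_cons] at h
      by_cases hx : x = z <;> by_cases hy : y = z <;> simp [hx, hy] at h
      · rw [hx, hy, ih _ h]
      · exfalso
        cases a with
        | nil => simp [mu_nil] at h <;> exact hy h.1.symm
        | cons c a' =>
          rw [mu_cons] at h
          by_cases hc : c = z <;> simp [hc] at h <;> try exact hy h.1.symm
      · exfalso
        cases b with
        | nil => simp [mu_nil] at h <;> exact hx h.1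
        | cons c b' =>
          rw [mu_cons] at h
          by_cases hc : c = z <;> simp [hc] at h <;> try exact hx h.1
      · rw [h.1, ih _ h.2]

lemma pal_mu (z : Bool) (s : List Bool) :
    (mu z s ++ [z]).reverse = mu z s ++ [z] ↔ s.reverse = s := by
  rw [rev_mu]
  constructor
  · intro h
    exact mu_inj z _ _ (List.append_cancel_right h)
  · intro h; rw [h]

lemma mu_cons_head (z a : Bool) (u : List Bool) :
    mu z (a :: u) = z :: (if a = z then mu z u else a :: mu z u) := by
  rw [mu_cons]; by_cases h : a = z <;> simp [h]

lemma pal_sandwich (z : Bool) (x : List Bool) :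
    (z :: (x ++ [z])).reverse = z :: (x ++ [z]) ↔ x.reverse = x := by
  rw [List.reverse_cons, List.reverse_append]
  constructor
  · intro h
    have h2 : ([z] ++ x.reverse) ++ [z] = ([z] ++ x) ++ [z] := by
      simpa using h
    have := List.append_cancel_right h2
    exact List.append_cancel_left this
  · intro h; rw [h]; rfl

lemma boundary_z (z : Bool) : ∀ (u : List Bool) (j : ℕ), j ≤ (mu z u).length →
    (∃ r, (mu z u ++ [z]).drop j = z :: r) →
    ∃ i, i ≤ u.length ∧ j = (mu z (u.take i)).length ∧ (mu z u).drop j = mu z (u.drop i) := by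
  intro u
  induction u with
  | nil =>
    intro j hj _
    have hj0 : j = 0 := Nat.le_zero.mp (by simpa [mu_nil] using hj)
    subst hj0
    exact ⟨0, by simp [mu_nil]⟩
  | cons a u ih =>
    intro j hj hz
    cases j with
    | zero => exact ⟨0, by simp [mu_nil]⟩
    | succ j =>
      by_cases ha : a = z
      · rw [mu_cons_head, if_pos ha] at hj hz ⊢
        simp only [List.length_cons, Nat.succ_le_succ_iff] at hj
        simp only [List.cons_append, List.drop_succ_cons] at hz ⊢
        obtain ⟨i, hi1, hi2, hi3⟩ := ih j hj hz
        refine ⟨i + 1, by simpa using hi1, ?_, ?_⟩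
        · rw [List.take_succ_cons, mu_cons_head, if_pos ha, List.length_cons, hi2]
        · rw [List.drop_succ_cons, hi3]
      · rw [mu_cons_head, if_neg ha] at hj hz ⊢
        cases j with
        | zero =>
          exfalso
          obtain ⟨r, hr⟩ := hz
          simp only [List.cons_append, List.drop_succ_cons, List.drop_zero] at hr
          exact ha (List.head_eq_of_cons_eq hr)
        | succ j =>
          simp only [List.length_cons, Nat.succ_le_succ_iff] at hj
          simp only [List.cons_append, List.drop_succ_cons] at hz ⊢
          obtain ⟨i, hi1, hi2, hi3⟩ := ih j hj hz
          refine ⟨i + 1, by simpa using hi1, ?_, ?_⟩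
          · rw [List.take_succ_cons, mu_cons_head, if_neg ha, List.length_cons, List.length_cons, hi2]
          · rw [List.drop_succ_cons, hi3]

lemma boundary_nz (z : Bool) : ∀ (u : List Bool) (j : ℕ), j < (mu z u).length →
    (∃ a r, (mu z u).drop j = a :: r ∧ a ≠ z) →
    ∃ i, i < u.length ∧ j = (mu z (u.take i)).length + 1 ∧
      (mu z u).drop j = (mu z (u.drop i)).drop 1 := by
  intro u
  induction u with
  | nil => intro j hj _; simp [mu_nil] at hj
  | cons a u ih =>
    intro j hj hz
    cases j with
    | zero =>
      exfalso
      obtain ⟨b, r, hr, hb⟩ := hz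
      rw [List.drop_zero, mu_cons_head] at hr
      exact hb (List.head_eq_of_cons_eq hr).symm
    | succ j =>
      by_cases ha : a = z
      · rw [mu_cons_head, if_pos ha] at hj hz ⊢
        simp only [List.length_cons, Nat.succ_lt_succ_iff] at hj
        simp only [List.drop_succ_cons] at hz ⊢
        obtain ⟨i, hi1, hi2, hi3⟩ := ih j hj hz
        refine ⟨i + 1, by simpa using hi1, ?_, ?_⟩
        · rw [List.take_succ_cons, mu_cons_head, if_pos ha, List.length_cons, hi2]
        · rw [List.drop_succ_cons, hi3]
      · rw [mu_cons_head, if_neg ha] at hj hz ⊢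
        cases j with
        | zero =>
          refine ⟨0, by simp, by simp [mu_nil], ?_⟩
          simp only [List.take_zero, List.drop_zero, mu_cons_head, if_neg ha]
        | succ j =>
          simp only [List.length_cons, Nat.succ_lt_succ_iff] at hj
          simp only [List.drop_succ_cons] at hz ⊢
          obtain ⟨i, hi1, hi2, hi3⟩ := ih j hj hz
          refine ⟨i + 1, by simpa using hi1, ?_, ?_⟩
          · rw [List.take_succ_cons, mu_cons_head, if_neg ha, List.length_cons, List.length_cons, hi2]
          · rw [List.drop_succ_cons, hi3]

lemma palClosure_eq (w : List Bool) (K : ℕ)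
    (h1 : (w.drop K).reverse = w.drop K)
    (h2 : ∀ j < K, ¬ ((w.drop j).reverse = w.drop j)) :
    palClosure w = w ++ (w.take K).reverse := by
  have hfind : Nat.find (p := fun k => (w.drop k).reverse = w.drop k)
      ⟨w.length, by simp⟩ = K := (Nat.find_eq_iff _).mpr ⟨h1, h2⟩
  simp only [palClosure]
  rw [hfind, List.take_append_drop]

lemma mu_take_length_le (z : Bool) (u : List Bool) (K i : ℕ) (h : K ≤ i) :
    (mu z (u.take K)).length ≤ (mu z (u.take i)).length := by
  have h0 : u.take K = (u.take i).take K := by rw [List.take_take, min_eq_left h]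
  rw [h0]
  conv_rhs => rw [← List.take_append_drop K (u.take i)]
  rw [mu_append, List.length_append]
  omega

lemma closureA (z : Bool) (u : List Bool) :
    palClosure (mu z u ++ [z]) = mu z (palClosure u) ++ [z] := by
  have hEx : ∃ k, ((u.drop k).reverse = u.drop k) := ⟨u.length, by simp⟩
  set K := Nat.find hEx with hKdef
  have h1 : (u.drop K).reverse = u.drop K := Nat.find_spec hEx
  have h2 : ∀ j < K, ¬ ((u.drop j).reverse = u.drop j) := fun j hj => Nat.find_min hEx hj
  set t := u.take K with ht
  set s := u.drop K with hs
  have hu : t ++ s = u := List.take_append_drop K u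
  have hW : mu z u ++ [z] = mu z t ++ (mu z s ++ [z]) := by
    rw [← hu, mu_append, List.append_assoc]
  -- minimality for W
  have hmin : ∀ j < (mu z t).length, ¬ (((mu z u ++ [z]).drop j).reverse = (mu z u ++ [z]).drop j) := by
    intro j hj hpal
    have hjle : j ≤ (mu z u).length := by
      have : (mu z u).length = (mu z t).length + (mu z s).length := by
        rw [← hu, mu_append, List.length_append]
      omega
    have hdrop : (mu z u ++ [z]).drop j = (mu z u).drop j ++ [z] := by
      rw [List.drop_append, Nat.sub_eq_zero_of_le hjle, List.drop_zero]
    have hex : ∃ r, (mu z u ++ [z]).drop j = z :: r := by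
      refine ⟨((mu z u).drop j).reverse, ?_⟩
      rw [← hpal, hdrop, List.reverse_append]
      rfl
    obtain ⟨i, hi1, hi2, hi3⟩ := boundary_z z u j hjle hex
    have hpals : (u.drop i).reverse = u.drop i := by
      rw [← pal_mu z]
      rw [hdrop, hi3] at hpal
      exact hpal
    have hKi : K ≤ i := Nat.find_min' hEx hpals
    have hle := mu_take_length_le z u K i hKi
    have hbt : (mu z t).length = (mu z (List.take K u)).length := rfl
    omega
  have hpalW : (((mu z u ++ [z]).drop (mu z t).length).reverse = (mu z u ++ [z]).drop (mu z t).length) := by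
    rw [hW, List.drop_left]
    exact (pal_mu z s).mpr h1
  have hcl : palClosure (mu z u ++ [z]) = (mu z u ++ [z]) ++ ((mu z u ++ [z]).take (mu z t).length).reverse :=
    palClosure_eq _ _ hpalW hmin
  have htake : (mu z u ++ [z]).take (mu z t).length = mu z t := by
    rw [hW, List.take_left]
  rw [hcl, htake, palClosure_eq u K h1 h2, ← ht, mu_append]
  have hzz : mu z t.reverse ++ [z] = [z] ++ (mu z t).reverse := by
    rw [← rev_mu, List.reverse_append]
    rfl
  rw [List.append_assoc (mu z u), ← hzz, ← List.append_assoc]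

lemma closureA2 (z w : Bool) (hw : w ≠ z) (q : List Bool) :
    palClosure (mu z (q ++ [w])) = mu z (palClosure (q ++ [w])) ++ [z] := by
  set u := q ++ [w] with hudef
  have hEx : ∃ k, ((u.drop k).reverse = u.drop k) := ⟨u.length, by simp⟩
  set K := Nat.find hEx with hKdef
  have h1 : (u.drop K).reverse = u.drop K := Nat.find_spec hEx
  have h2 : ∀ j < K, ¬ ((u.drop j).reverse = u.drop j) := fun j hj => Nat.find_min hEx hj
  have hKq : K ≤ q.length := Nat.find_min' hEx
    (by rw [hudef, List.drop_left]; simp)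
  set t := u.take K with ht
  set s := u.drop K with hs
  have hu : t ++ s = u := List.take_append_drop K u
  have hulen : u.length = q.length + 1 := by rw [hudef]; simp
  have hslen : s ≠ [] := by
    have hsl : s.length = u.length - K := by rw [hs, List.length_drop]
    intro hnil
    rw [hnil] at hsl
    simp at hsl
    omega
  obtain ⟨c, s', hcs⟩ := List.exists_cons_of_ne_nil hslen
  have hmuS : mu z s = z :: (if c = z then mu z s' else c :: mu z s') := by
    rw [hcs, mu_cons_head]
  set R := if c = z then mu z s' else c :: mu z s' with hR
  have hW : mu z u = (mu z t ++ [z]) ++ R := by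
    rw [← hu, mu_append, hmuS]
    simp [List.append_assoc]
  have hlen : (mu z t ++ [z]).length = (mu z t).length + 1 := by simp
  have hdropKW : (mu z u).drop ((mu z t).length + 1) = R := by
    rw [hW, ← hlen, List.drop_left]
  have hpalR : R.reverse = R := by
    have h3 : (mu z s ++ [z]).reverse = mu z s ++ [z] := (pal_mu z s).mpr h1
    have h4 : mu z s ++ [z] = z :: (R ++ [z]) := by rw [hmuS, List.cons_append]
    rw [h4] at h3
    exact (pal_sandwich z R).mp h3
  have htq : t = q.take K := by rw [ht, hudef, List.take_append_of_le_length hKq]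
  have hmin : ∀ j < (mu z t).length + 1,
      ¬ (((mu z u).drop j).reverse = (mu z u).drop j) := by
    intro j hj hpal
    have hjq : j ≤ (mu z q).length := by
      have hle : (mu z t).length ≤ (mu z q).length := by
        conv_rhs => rw [← List.take_append_drop K q]
        rw [mu_append, List.length_append, ← htq]
        omega
      omega
    have hWq : mu z u = (mu z q ++ [z]) ++ [w] := by
      rw [hudef, mu_append, mu_singleton, if_neg hw]
      simp [List.append_assoc]
    have hj1 : j ≤ (mu z q ++ [z]).length := by simp; omega
    have hdropj : (mu z u).drop j = ((mu z q ++ [z]).drop j) ++ [w] := by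
      rw [hWq, List.drop_append, Nat.sub_eq_zero_of_le hj1, List.drop_zero]
    have hex : ∃ a r, (mu z u).drop j = a :: r ∧ a ≠ z := by
      refine ⟨w, ((mu z q ++ [z]).drop j).reverse, ?_, hw⟩
      rw [← hpal, hdropj, List.reverse_append]
      rfl
    have hjlt : j < (mu z u).length := by
      have : (mu z u).length = (mu z q).length + 2 := by rw [hWq]; simp
      omega
    obtain ⟨i, hi1, hi2, hi3⟩ := boundary_nz z u j hjlt hex
    have hne : u.drop i ≠ [] := by
      intro hnil
      have hld : (u.drop i).length = u.length - i := List.length_drop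
      rw [hnil] at hld
      simp at hld
      omega
    obtain ⟨c2, s2, hcs2⟩ := List.exists_cons_of_ne_nil hne
    have hmuS2 : mu z (u.drop i) = z :: (if c2 = z then mu z s2 else c2 :: mu z s2) := by
      rw [hcs2, mu_cons_head]
    have hpal2 : (u.drop i).reverse = u.drop i := by
      refine (pal_mu z _).mp ?_
      have h5 : mu z (u.drop i) ++ [z] = z :: (((mu z (u.drop i)).drop 1) ++ [z]) := by
        rw [hmuS2]
        simp
      rw [h5]
      refine (pal_sandwich z _).mpr ?_
      rw [← hi3]
      exact hpal
    have hKi : K ≤ i := Nat.find_min' hEx hpal2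
    have hle := mu_take_length_le z u K i hKi
    have hbt : (mu z t).length = (mu z (List.take K u)).length := rfl
    omega
  have hcl := palClosure_eq (mu z u) ((mu z t).length + 1)
    (by rw [hdropKW]; exact hpalR) hmin
  have htake : (mu z u).take ((mu z t).length + 1) = mu z t ++ [z] := by
    rw [hW, ← hlen, List.take_left]
  rw [hcl, htake, palClosure_eq u K h1 h2, ← ht, rev_mu, mu_append z u t.reverse,
    ← List.append_assoc]

lemma psi_snoc (v : List Bool) (z : Bool) : psi (v ++ [z]) = palClosure (psi v ++ [z]) := by
  simp [psi, List.foldl_append]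

lemma psi_cons (z : Bool) (v : List Bool) : psi (z :: v) = mu z (psi v) ++ [z] := by
  induction v using List.reverseRecOn with
  | nil =>
    show palClosure ([] ++ [z]) = mu z (psi []) ++ [z]
    simp only [List.nil_append]
    rw [palClosure_eq [z] 0 (by simp) (by intro j hj; omega)]
    simp [psi, mu_nil]
  | append_singleton v w ih =>
    have hassoc : z :: (v ++ [w]) = (z :: v) ++ [w] := rfl
    rw [hassoc, psi_snoc, ih, psi_snoc]
    by_cases hw : w = z
    · rw [hw]
      have e1 : mu z (psi v) ++ [z] ++ [z] = mu z (psi v ++ [z]) ++ [z] := by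
        rw [mu_append, mu_singleton, if_pos rfl]
      rw [e1, closureA]
    · have e1 : mu z (psi v) ++ [z] ++ [w] = mu z (psi v ++ [w]) := by
        rw [mu_append, mu_singleton, if_neg hw]
        simp
      rw [e1, closureA2 z w hw (psi v)]

theorem stmt8 (v : List Bool) (x y : Bool) (hxy : x ≠ y) :
    muW v [x, y] = psi v ++ [x, y] := by
  induction v with
  | nil => simp [muW, psi]
  | cons z v ih =>
    show mu z (muW v [x, y]) = psi (z :: v) ++ [x, y]
    rw [ih, psi_cons, mu_append]
    have hzxy : mu z [x, y] = [z, x, y] := by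
      cases z <;> cases x <;> cases y <;> revert hxy <;> decide
    rw [hzxy]
    simp
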